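/- Let K ⊆ ℝⁿ be compact, f : ℝⁿ → ℝⁿ Lipschitz with constant L on a neighborhood of K, 0 < δ' < δ, and τ > 0. Then there exists r > 0 (depending only on K, τ, δ', δ) such that: whenever x : [0,T] → ℝⁿ is a solution of x'(s) ∈ B_{δ'}(f(x(s))) with x(s) ∈ K for all s ∈ [0,T] and T ≥ τ, then for any y₀ ∈ B_r(x(0)) and y₁ ∈ B_r(x(T)), the function y(s) = x(s) + (s/T)(y₁ − x(T) + x(0) − y₀) + (y₀ − x(0)) is a solution of y'(s) ∈ B_δ(f(y(s))) on [0,T] with y(0) = y₀ and y(T) = y₁. -/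

import Mathlib

open Metric Set

/-- Steering lemma: for a compact `K`, `f` Lipschitz on a neighborhood of `K`,
`0 < δ' < δ` and `τ > 0`, there is `r > 0` such that any `δ'`-solution staying in
`K` on `[0,T]` (`T ≥ τ`) can be corrected by linear interpolation into a
`δ`-solution steering any `y₀ ∈ B_r(x(0))` to any `y₁ ∈ B_r(x(T))`. -/
theorem steering_lemma {n : ℕ}
    (f : EuclideanSpace ℝ (Fin n) → EuclideanSpace ℝ (Fin n))
    (K : Set (EuclideanSpace ℝ (Fin n))) (hK : IsCompact K)
    (L : NNReal) (V : Set (EuclideanSpace ℝ (Fin n)))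
    (hV : IsOpen V) (hKV : K ⊆ V) (hf : LipschitzOnWith L f V)
    (δ' δ τ : ℝ) (hδ' : 0 < δ') (hδ : δ' < δ) (hτ : 0 < τ) :
    ∃ r > 0, ∀ (T : ℝ), τ ≤ T →
      ∀ x : ℝ → EuclideanSpace ℝ (Fin n),
        (∀ s ∈ Icc (0 : ℝ) T, ∃ v, HasDerivAt x v s ∧ ‖v - f (x s)‖ ≤ δ') →
        (∀ s ∈ Icc (0 : ℝ) T, x s ∈ K) →
        ∀ y₀ ∈ closedBall (x 0) r, ∀ y₁ ∈ closedBall (x T) r,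
          (fun s : ℝ => x s + (s / T) • (y₁ - x T + (x 0 - y₀)) + (y₀ - x 0)) 0 = y₀ ∧
          (fun s : ℝ => x s + (s / T) • (y₁ - x T + (x 0 - y₀)) + (y₀ - x 0)) T = y₁ ∧
          (∀ s ∈ Icc (0 : ℝ) T, ∃ v,
            HasDerivAt (fun s : ℝ => x s + (s / T) • (y₁ - x T + (x 0 - y₀)) + (y₀ - x 0)) v s ∧
            ‖v - f (x s + (s / T) • (y₁ - x T + (x 0 - y₀)) + (y₀ - x 0))‖ ≤ δ) := by
  obtain ⟨r₀, hr₀, hthick⟩ := hK.exists_thickening_subset_open hV hKV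
  set M : ℝ := 2 / τ + 3 * L + 1 with hM
  have hMpos : 0 < M := by positivity
  refine ⟨min (r₀ / 4) ((δ - δ') / M), lt_min (by positivity) (by
    have : 0 < δ - δ' := by linarith
    positivity), ?_⟩
  set r : ℝ := min (r₀ / 4) ((δ - δ') / M) with hr
  have hrpos : 0 < r := lt_min (by positivity) (by
    have : 0 < δ - δ' := by linarith
    positivity)
  have hr1 : r ≤ r₀ / 4 := min_le_left _ _
  have hr2 : r * M ≤ δ - δ' := by
    calc r * M ≤ (δ - δ') / M * M := by
          exact mul_le_mul_of_nonneg_right (min_le_right _ _) hMpos.le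
      _ = δ - δ' := div_mul_cancel₀ _ hMpos.ne'
  intro T hT x hx hxK y₀ hy₀ y₁ hy₁
  have hTpos : 0 < T := lt_of_lt_of_le hτ hT
  set c := y₁ - x T + (x 0 - y₀) with hc
  have hy₀' : ‖y₀ - x 0‖ ≤ r := by
    rw [← dist_eq_norm]; exact mem_closedBall.mp hy₀
  have hy₁' : ‖y₁ - x T‖ ≤ r := by
    rw [← dist_eq_norm]; exact mem_closedBall.mp hy₁
  have hcnorm : ‖c‖ ≤ 2 * r := by
    calc ‖c‖ ≤ ‖y₁ - x T‖ + ‖x 0 - y₀‖ := norm_add_le _ _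
      _ ≤ r + r := add_le_add hy₁' (by rw [norm_sub_rev]; exact hy₀')
      _ = 2 * r := by ring
  refine ⟨?_, ?_, ?_⟩
  · simp
  · have : T / T = (1 : ℝ) := div_self hTpos.ne'
    simp only [this, one_smul, hc]
    abel
  · intro s hs
    have hderiv : HasDerivAt (fun s : ℝ => x s + (s / T) • c + (y₀ - x 0))
        ((Classical.choose (hx s hs)) + T⁻¹ • c) s := by
      have h1 := (Classical.choose_spec (hx s hs)).1
      have h2 : HasDerivAt (fun s : ℝ => (s / T) • c) (T⁻¹ • c) s := by
        have : HasDerivAt (fun s : ℝ => s / T) T⁻¹ s := by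
          simpa using (hasDerivAt_id s).div_const T
        exact this.smul_const c
      exact (h1.add h2).add_const _
    refine ⟨_, hderiv, ?_⟩
    set v := Classical.choose (hx s hs) with hv
    have hvnorm := (Classical.choose_spec (hx s hs)).2
    set y := x s + (s / T) • c + (y₀ - x 0) with hy
    have hdiff : ‖y - x s‖ ≤ 3 * r := by
      have hsT : ‖(s / T) • c‖ ≤ 2 * r := by
        rw [norm_smul]
        have h0 : 0 ≤ s / T := div_nonneg hs.1 hTpos.le
        have h1 : s / T ≤ 1 := (div_le_one hTpos).mpr hs.2
        calc ‖(s / T : ℝ)‖ * ‖c‖ = (s / T) * ‖c‖ := by rw [Real.norm_of_nonneg h0]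
          _ ≤ 1 * (2 * r) := mul_le_mul h1 hcnorm (norm_nonneg _) one_pos.le
          _ = 2 * r := one_mul _
      calc ‖y - x s‖ = ‖(s / T) • c + (y₀ - x 0)‖ := by rw [hy]; abel_nf
        _ ≤ ‖(s / T) • c‖ + ‖y₀ - x 0‖ := norm_add_le _ _
        _ ≤ 2 * r + r := add_le_add hsT hy₀'
        _ = 3 * r := by ring
    have hyV : y ∈ V := by
      apply hthick
      rw [mem_thickening_iff]
      refine ⟨x s, hxK s hs, ?_⟩
      rw [dist_eq_norm]
      calc ‖y - x s‖ ≤ 3 * r := hdiff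
        _ ≤ 3 * (r₀ / 4) := by linarith
        _ < r₀ := by linarith
    have hxV : x s ∈ V := hKV (hxK s hs)
    have hlip : ‖f (x s) - f y‖ ≤ L * (3 * r) := by
      have := hf.norm_sub_le hxV hyV
      calc ‖f (x s) - f y‖ ≤ L * ‖x s - y‖ := this
        _ ≤ L * (3 * r) := by
            apply mul_le_mul_of_nonneg_left _ L.2
            rw [norm_sub_rev]; exact hdiff
    have hcT : ‖T⁻¹ • c‖ ≤ 2 * r / τ := by
      rw [norm_smul, Real.norm_of_nonneg (inv_nonneg.mpr hTpos.le)]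
      calc T⁻¹ * ‖c‖ ≤ τ⁻¹ * (2 * r) := by
            apply mul_le_mul (inv_anti₀ hτ hT) hcnorm (norm_nonneg _)
              (inv_nonneg.mpr hτ.le)
        _ = 2 * r / τ := by ring
    calc ‖v + T⁻¹ • c - f y‖ = ‖(v - f (x s)) + (f (x s) - f y) + T⁻¹ • c‖ := by
          congr 1; abel
      _ ≤ ‖(v - f (x s)) + (f (x s) - f y)‖ + ‖T⁻¹ • c‖ := norm_add_le _ _
      _ ≤ ‖v - f (x s)‖ + ‖f (x s) - f y‖ + ‖T⁻¹ • c‖ := by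
          exact add_le_add (norm_add_le _ _) le_rfl
      _ ≤ δ' + L * (3 * r) + 2 * r / τ := by
          exact add_le_add (add_le_add hvnorm hlip) hcT
      _ = δ' + r * (3 * L + 2 / τ) := by ring
      _ ≤ δ' + (δ - δ') := by
          have : r * (3 * L + 2 / τ) + r ≤ δ - δ' := by
            calc r * (3 * L + 2 / τ) + r = r * M := by rw [hM]; ring
              _ ≤ δ - δ' := hr2
          linarith
      _ = δ := by ring
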